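/- Let l̃₁, l̃₂ be reals with l̃₁ ≤ l̃₂ < h and μ ≤ h. Then for every q ∈ [0,1]: max( μ, q·h + (1−q)·l̃₁ ) ≤ max( μ, q·h + (1−q)·l̃₂ ) ≤ ((h−l̃₂)/(h−l̃₁))·max( μ, q·h + (1−q)·l̃₁ ) + ((l̃₂−l̃₁)/(h−l̃₁))·h. -/

import Mathlib

set_option autoImplicit false

/-- For `l̃₁ ≤ l̃₂ < h` and `μ ≤ h`, for every `q ∈ [0,1]`,
`max(μ, q h + (1−q) l̃₁) ≤ max(μ, q h + (1−q) l̃₂)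
  ≤ ((h−l̃₂)/(h−l̃₁)) max(μ, q h + (1−q) l̃₁) + ((l̃₂−l̃₁)/(h−l̃₁)) h`. -/
theorem stmt_17 (μ h l₁ l₂ : ℝ)
    (h12 : l₁ ≤ l₂) (h2h : l₂ < h) (hμh : μ ≤ h) :
    ∀ q ∈ Set.Icc (0 : ℝ) 1,
      max μ (q * h + (1 - q) * l₁) ≤ max μ (q * h + (1 - q) * l₂)
      ∧ max μ (q * h + (1 - q) * l₂)
        ≤ ((h - l₂) / (h - l₁)) * max μ (q * h + (1 - q) * l₁)
          + ((l₂ - l₁) / (h - l₁)) * h := by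
  rintro q ⟨hq0, hq1⟩
  have ha : 0 < h - l₁ := by linarith
  have hM1 : μ ≤ max μ (q * h + (1 - q) * l₁) := le_max_left _ _
  have hM2 : q * h + (1 - q) * l₁ ≤ max μ (q * h + (1 - q) * l₁) := le_max_right _ _
  constructor
  · apply max_le_max le_rfl
    nlinarith
  · apply max_le
    · rw [div_mul_eq_mul_div, div_mul_eq_mul_div, ← add_div, le_div_iff₀ ha]
      nlinarith
    · rw [div_mul_eq_mul_div, div_mul_eq_mul_div, ← add_div, le_div_iff₀ ha]
      nlinarith
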